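/- Let R be a regular F-finite ring of characteristic p, f ∈ R, and α = r/(p^e − 1) with r a positive integer. Define the F-flag of ideals by I^1 = τ(f^α) and I^{j+1} = ((I^j)^{[p^e]} : f^r). Then I^j ⊆ I^{j+1} and f^r I^{j+1} ⊆ (I^j)^{[p^e]} for every j ≥ 1. -/

import Mathlib

/-- The `q`-th Frobenius power `I^{[q]}` of an ideal: the ideal generated by `q`-th powers
of elements of `I`. -/
def frobPow {R : Type*} [CommRing R] (I : Ideal R) (q : ℕ) : Ideal R :=
  Ideal.span ((fun x => x ^ q) '' (I : Set R))
/-- `I^{[1/q]}`: the smallest ideal `J` with `I ⊆ J^{[q]}` (in a regular ring). -/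
noncomputable def frobRoot {R : Type*} [CommRing R] (I : Ideal R) (q : ℕ) : Ideal R :=
  sInf {J : Ideal R | I ≤ frobPow J q}

/-- The generalized test ideal `τ(f^c) = ⋃_e (f^{⌈c p^e⌉})^{[1/p^e]}`. -/
noncomputable def testIdeal {R : Type*} [CommRing R] (p : ℕ) (f : R) (c : ℝ) : Ideal R :=
  ⨆ e : ℕ, frobRoot (Ideal.span {f ^ (⌈c * (p : ℝ) ^ e⌉₊)}) (p ^ e)
/-- The `F`-flag of ideals associated to `f` and `c`: `I^1 = τ(f^c)`,
`I^{j+1} = ((I^j)^{[p^e]} : f^r)`.  (The value at `0` is junk.) -/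
noncomputable def Fflag {R : Type*} [CommRing R] (p e r : ℕ) (f : R) (c : ℝ) : ℕ → Ideal R
  | 0 => ⊤
  | 1 => testIdeal p f c
  | (j + 2) => (frobPow (Fflag p e r f c (j + 1)) (p ^ e)).colon (Ideal.span {f ^ r})

section Basics

variable {R : Type*} [CommRing R]

lemma frobPow_mono {I J : Ideal R} (h : I ≤ J) (q : ℕ) : frobPow I q ≤ frobPow J q :=
  Ideal.span_mono (Set.image_mono h)

lemma frobPow_one (I : Ideal R) : frobPow I 1 = I := by
  simp only [frobPow, pow_one, Set.image_id']
  exact Ideal.span_eq I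

lemma pow_mem_frobPow {I : Ideal R} {x : R} (hx : x ∈ I) (q : ℕ) : x ^ q ∈ frobPow I q :=
  Ideal.subset_span ⟨x, hx, rfl⟩

lemma frobPow_eq_map (p : ℕ) [ExpChar R p] (I : Ideal R) (E : ℕ) :
    frobPow I (p ^ E) = I.map (iterateFrobenius R p E) := rfl

lemma frobPow_p_eq_map (p : ℕ) [ExpChar R p] (I : Ideal R) :
    frobPow I p = I.map (frobenius R p) := by
  have h := frobPow_eq_map p I 1
  rw [pow_one] at h
  rw [h, iterateFrobenius_one]

lemma frobPow_frobPow (p : ℕ) [ExpChar R p] (I : Ideal R) (a b : ℕ) :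
    frobPow (frobPow I (p ^ a)) (p ^ b) = frobPow I (p ^ (a + b)) := by
  rw [frobPow_eq_map, frobPow_eq_map, frobPow_eq_map, Ideal.map_map, add_comm a b,
    iterateFrobenius_add]

end Basics

/-- `R` viewed as a module over itself via the ring hom `φ`. -/
def FrobM (R : Type*) [CommRing R] (φ : R →+* R) : Type _ := R

namespace FrobM

variable {R : Type*} [CommRing R] (φ : R →+* R)

instance : AddCommGroup (FrobM R φ) := inferInstanceAs (AddCommGroup R)
instance : Module R (FrobM R φ) := Module.compHom R φ

/-- identity, as a map `R → FrobM R φ`. -/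
def mk : R → FrobM R φ := id
/-- identity, as a map `FrobM R φ → R`. -/
def un : FrobM R φ → R := id

@[simp] lemma un_mk (x : R) : un φ (mk φ x) = x := rfl
@[simp] lemma mk_un (m : FrobM R φ) : mk φ (un φ m) = m := rfl
@[simp] lemma un_smul (r : R) (m : FrobM R φ) : un φ (r • m) = φ r * un φ m := rfl
@[simp] lemma un_add (m n : FrobM R φ) : un φ (m + n) = un φ m + un φ n := rfl
@[simp] lemma un_zero : un φ (0 : FrobM R φ) = 0 := rfl

lemma un_injective : Function.Injective (un φ) := fun _ _ h => h

/-- `un` as an additive hom. -/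
def unHom : FrobM R φ →+ R where
  toFun := un φ
  map_zero' := rfl
  map_add' _ _ := rfl

@[simp] lemma unHom_apply (m : FrobM R φ) : unHom φ m = un φ m := rfl

lemma mem_smul_top_iff (J : Ideal R) (m : FrobM R φ) :
    m ∈ J • (⊤ : Submodule R (FrobM R φ)) ↔ un φ m ∈ J.map φ := by
  constructor
  · intro h
    refine Submodule.smul_induction_on h (fun a ha t _ => ?_) (fun x y hx hy => ?_)
    · show φ a * un φ t ∈ J.map φ
      exact Ideal.mul_mem_right _ _ (Ideal.mem_map_of_mem φ ha)
    · exact Ideal.add_mem _ hx hy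
  · intro h
    have key : ∀ v ∈ J.map φ, mk φ v ∈ J • (⊤ : Submodule R (FrobM R φ)) := by
      intro v hv
      refine Submodule.span_induction ?_ ?_ ?_ ?_ hv
      · rintro _ ⟨a, ha, rfl⟩
        have : mk φ (φ a) = a • (mk φ 1 : FrobM R φ) := by
          apply un_injective φ
          simp
        rw [this]
        exact Submodule.smul_mem_smul ha trivial
      · exact Submodule.zero_mem _
      · intro x y _ _ hx hy
        have : mk φ (x + y) = mk φ x + mk φ y := rfl
        rw [this]; exact Submodule.add_mem _ hx hy
      · intro r x _ hx
        -- goal: mk φ (r • x) ∈ J • ⊤, given mk φ x ∈ J • ⊤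
        have stab : ∀ m ∈ J • (⊤ : Submodule R (FrobM R φ)),
            mk φ (r * un φ m) ∈ J • (⊤ : Submodule R (FrobM R φ)) := by
          intro m hm
          refine Submodule.smul_induction_on hm (fun a ha t _ => ?_) (fun u w hu hw => ?_)
          · have : mk φ (r * un φ (a • t)) = a • mk φ (r * un φ t) := by
              apply un_injective φ
              simp [mul_left_comm]
            rw [this]
            exact Submodule.smul_mem_smul ha trivial
          · have : mk φ (r * un φ (u + w)) = mk φ (r * un φ u) + mk φ (r * un φ w) := by
              apply un_injective φ
              simp [mul_add]
            rw [this]; exact Submodule.add_mem _ hu hw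
        simpa using stab (mk φ x) hx
    simpa using key (un φ m) h

end FrobM

section Flat

universe u

variable {R : Type u} [CommRing R]

open Finset in
/-- Key consequence of flatness of Frobenius (equational criterion):
`(J^{[φ]} : φ(y)) ⊆ (J : y)^{[φ]}`, elementwise form. -/
theorem flat_colon (φ : R →+* R) (hflat : Module.Flat R (FrobM R φ)) {J : Ideal R} {y z : R}
    (h : z * φ y ∈ J.map φ) : z ∈ (J.colon (Ideal.span {y})).map φ := by
  classical
  haveI : Module.Flat R (FrobM R φ) := hflat
  have h' : z * φ y ∈ Ideal.span (⇑φ '' (J : Set R)) := h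
  obtain ⟨n, c, g, hg⟩ := Submodule.mem_span_set'.mp h'
  choose a ha hφa using fun i => (g i).2
  set F : Fin (n+1) → R := Fin.cases y (fun i => - a i) with hF
  set X : Fin (n+1) → FrobM R φ := Fin.cases (FrobM.mk φ z) (fun i => FrobM.mk φ (c i)) with hX
  set F' : ULift.{u} (Fin (n+1)) → R := fun i => F i.down with hF'
  set X' : ULift.{u} (Fin (n+1)) → FrobM R φ := fun i => X i.down with hX'
  have hrel : ∑ i, F' i • X' i = 0 := by
    apply FrobM.un_injective φ
    rw [show FrobM.un φ (∑ i, F' i • X' i) = FrobM.unHom φ (∑ i, F' i • X' i) from rfl]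
    rw [map_sum]
    rw [Fintype.sum_equiv (Equiv.ulift) (fun i => FrobM.unHom φ (F' i • X' i))
      (fun i => FrobM.unHom φ (F i • X i)) (fun i => rfl)]
    simp only [FrobM.unHom_apply, FrobM.un_smul]
    rw [Fin.sum_univ_succ]
    simp only [hF, hX, Fin.cases_zero, Fin.cases_succ, FrobM.un_mk, map_neg, FrobM.un_zero,
      neg_mul]
    have hsum : ∑ x : Fin n, -(φ (a x) * c x) = -(z * φ y) := by
      rw [← hg, ← Finset.sum_neg_distrib]
      refine Finset.sum_congr rfl fun i _ => ?_
      rw [← hφa i, smul_eq_mul]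
      ring
    rw [hsum]
    ring
  obtain ⟨κ, A, Y, hXY, hA⟩ := Module.Flat.isTrivialRelation_of_sum_smul_eq_zero hrel
  have hz : z = ∑ j, φ (A ⟨0⟩ j) * FrobM.un φ (Y j) := by
    have h0 := hXY ⟨0⟩
    have := congrArg (FrobM.un φ) h0
    rw [show FrobM.un φ (∑ j, A ⟨0⟩ j • Y j) = FrobM.unHom φ (∑ j, A ⟨0⟩ j • Y j) from rfl,
      map_sum] at this
    simpa [hX', hX] using this
  have hcolon : ∀ j, A ⟨0⟩ j ∈ J.colon (Ideal.span {y}) := by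
    intro j
    rw [Ideal.mem_colon_span_singleton]
    have h0 := hA j
    rw [Fintype.sum_equiv (Equiv.ulift) (fun i => F' i * A i j)
      (fun i => F i * A ⟨i⟩ j) (fun i => rfl)] at h0
    rw [Fin.sum_univ_succ] at h0
    simp only [hF, Fin.cases_zero, Fin.cases_succ, neg_mul] at h0
    rw [Finset.sum_neg_distrib] at h0
    have : y * A ⟨0⟩ j = ∑ i : Fin n, a i * A ⟨i.succ⟩ j := by linear_combination h0
    rw [mul_comm, this]
    exact Ideal.sum_mem _ fun i _ => Ideal.mul_mem_right _ _ (ha i)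
  rw [hz]
  exact Ideal.sum_mem _ fun j _ =>
    Ideal.mul_mem_right _ _ (Ideal.mem_map_of_mem φ (hcolon j))

end Flat

section SInf

universe u

variable {R : Type u} [CommRing R]

theorem mem_sInf_smul {M : Type u} [AddCommGroup M] [Module R M] [IsNoetherianRing R]
    [Module.Flat R M] [Module.Finite R M] (S : Set (Ideal R)) {x : M}
    (hx : ∀ J ∈ S, x ∈ J • (⊤ : Submodule R M)) : x ∈ sInf S • (⊤ : Submodule R M) := by
  classical
  haveI : Module.FinitePresentation R M := Module.finitePresentation_of_finite R M
  obtain ⟨κ, _, σ, π, hfact⟩ :=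
    (show ∃ (κ : Type) (_ : Fintype κ) (σ : M →ₗ[R] (κ →₀ R)) (π : (κ →₀ R) →ₗ[R] M),
        (LinearMap.id : M →ₗ[R] M) = π ∘ₗ σ from by
      obtain ⟨k, σ, π, h⟩ :=
        Module.Flat.exists_factorization_of_finitePresentation (LinearMap.id : M →ₗ[R] M)
      exact ⟨Fin k, inferInstance, σ, π, h⟩)
  have hσ : ∀ J ∈ S, σ x ∈ J • (⊤ : Submodule R (κ →₀ R)) := by
    intro J hJ
    have h1 : σ x ∈ (J • (⊤ : Submodule R M)).map σ := Submodule.mem_map_of_mem (hx J hJ)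
    rw [Submodule.map_smul''] at h1
    exact Submodule.smul_mono le_rfl le_top h1
  have hsmul_le : ∀ (J : Ideal R), J • (⊤ : Submodule R R) ≤ (J : Submodule R R) := by
    intro J
    refine Submodule.smul_le.mpr fun a ha t _ => ?_
    simpa [smul_eq_mul] using J.mul_mem_right t ha
  have hco : ∀ b : κ, (σ x) b ∈ sInf S := by
    intro b
    rw [Submodule.mem_sInf]
    intro J hJ
    have h2 : (σ x) b ∈ ((J • (⊤ : Submodule R (κ →₀ R))).map (Finsupp.lapply b)) :=
      Submodule.mem_map_of_mem (hσ J hJ)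
    rw [Submodule.map_smul''] at h2
    exact hsmul_le J (Submodule.smul_mono le_rfl le_top h2)
  have hx2 : σ x ∈ sInf S • (⊤ : Submodule R (κ →₀ R)) := by
    rw [← Finsupp.sum_single (σ x), Finsupp.sum]
    refine Submodule.sum_mem _ fun b _ => ?_
    have : Finsupp.single b ((σ x) b) = (σ x) b • Finsupp.single b (1 : R) := by
      rw [Finsupp.smul_single, smul_eq_mul, mul_one]
    rw [this]
    exact Submodule.smul_mem_smul (hco b) trivial
  have hxval : x = π (σ x) := by
    have := LinearMap.congr_fun hfact x
    simpa using this
  rw [hxval]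
  have h3 : π (σ x) ∈ (sInf S • (⊤ : Submodule R (κ →₀ R))).map π :=
    Submodule.mem_map_of_mem hx2
  rw [Submodule.map_smul''] at h3
  exact Submodule.smul_mono le_rfl le_top h3

theorem mem_map_sInf (φ : R →+* R) [IsNoetherianRing R]
    (hflat : Module.Flat R (FrobM R φ)) (hfin : Module.Finite R (FrobM R φ))
    (S : Set (Ideal R)) {x : R} (hx : ∀ J ∈ S, x ∈ J.map φ) : x ∈ (sInf S).map φ := by
  haveI := hflat; haveI := hfin
  have h : FrobM.mk φ x ∈ sInf S • (⊤ : Submodule R (FrobM R φ)) := by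
    apply mem_sInf_smul
    intro J hJ
    rw [FrobM.mem_smul_top_iff]
    simpa using hx J hJ
  rw [FrobM.mem_smul_top_iff] at h
  simpa using h

end SInf

section Iterate

universe u

variable {R : Type u} [CommRing R] (p : ℕ) [ExpChar R p]

lemma frobPow_succ (I : Ideal R) (E : ℕ) :
    frobPow I (p ^ (E + 1)) = frobPow (frobPow I (p ^ E)) p := by
  have h := frobPow_frobPow p I E 1
  rw [pow_one] at h
  exact h.symm

theorem mem_frobPow_sInf [IsNoetherianRing R]
    (hflat : Module.Flat R (FrobM R (frobenius R p)))
    (hfin : Module.Finite R (FrobM R (frobenius R p))) (E : ℕ) :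
    ∀ (S : Set (Ideal R)) (x : R), (∀ J ∈ S, x ∈ frobPow J (p ^ E)) →
      x ∈ frobPow (sInf S) (p ^ E) := by
  induction E with
  | zero =>
    intro S x hx
    rw [pow_zero, frobPow_one]
    exact Submodule.mem_sInf.mpr fun J hJ => by
      simpa [pow_zero, frobPow_one] using hx J hJ
  | succ E ih =>
    intro S x hx
    have h2 : x ∈ (sInf ((fun J => frobPow J (p ^ E)) '' S)).map (frobenius R p) := by
      apply mem_map_sInf _ hflat hfin
      rintro _ ⟨J, hJ, rfl⟩
      rw [← frobPow_p_eq_map, ← frobPow_succ]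
      exact hx J hJ
    have h3 : sInf ((fun J => frobPow J (p ^ E)) '' S) ≤ frobPow (sInf S) (p ^ E) := by
      intro y hy
      exact ih S y fun J hJ => Submodule.mem_sInf.mp hy _ ⟨J, hJ, rfl⟩
    have h4 := Ideal.map_mono (f := frobenius R p) h3 h2
    rwa [← frobPow_p_eq_map, ← frobPow_succ] at h4

theorem le_frobPow_frobRoot [IsNoetherianRing R]
    (hflat : Module.Flat R (FrobM R (frobenius R p)))
    (hfin : Module.Finite R (FrobM R (frobenius R p))) (I : Ideal R) (E : ℕ) :
    I ≤ frobPow (frobRoot I (p ^ E)) (p ^ E) := by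
  intro x hx
  exact mem_frobPow_sInf p hflat hfin E _ x fun J hJ => hJ hx

theorem colon_frobPow_le (hflat : Module.Flat R (FrobM R (frobenius R p)))
    (E : ℕ) (J : Ideal R) (y : R) :
    (frobPow J (p ^ E)).colon (Ideal.span {y ^ p ^ E}) ≤
      frobPow (J.colon (Ideal.span {y})) (p ^ E) := by
  induction E with
  | zero =>
    rw [pow_zero p, frobPow_one, frobPow_one, pow_one]
  | succ E ih =>
    intro z hz
    rw [Ideal.mem_colon_span_singleton] at hz
    have hz' : z * frobenius R p (y ^ p ^ E) ∈ (frobPow J (p ^ E)).map (frobenius R p) := by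
      rw [← frobPow_p_eq_map, ← frobPow_succ]
      rwa [frobenius_def, ← pow_mul, ← pow_succ]
    have h2 := flat_colon (frobenius R p) hflat hz'
    have h4 := Ideal.map_mono (f := frobenius R p) ih h2
    rwa [← frobPow_p_eq_map, ← frobPow_succ] at h4

end Iterate

section Main

universe u

variable {R : Type u} [CommRing R]

theorem testIdeal_le_colon (p : ℕ) [ExpChar R p] [IsNoetherianRing R]
    (hflat : Module.Flat R (FrobM R (frobenius R p)))
    (hfin : Module.Finite R (FrobM R (frobenius R p)))
    (f : R) (r e : ℕ) (he : 0 < e) (hp : 1 < p) (α : ℝ)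
    (hα : α = (r : ℝ) / ((p : ℝ) ^ e - 1)) :
    testIdeal p f α ≤ (frobPow (testIdeal p f α) (p ^ e)).colon (Ideal.span {f ^ r}) := by
  have hq1 : (1 : ℝ) < (p : ℝ) ^ e := by
    have h1 : (1 : ℝ) < (p : ℝ) := by exact_mod_cast hp
    exact one_lt_pow₀ h1 he.ne'
  have hα0 : 0 ≤ α := by
    rw [hα]
    have := sub_pos.mpr hq1
    positivity
  have hkey : α * ((p : ℝ) ^ e - 1) = r := by
    rw [hα]
    field_simp
    exact mul_div_cancel_right₀ _ (sub_ne_zero.mpr hq1.ne')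
  have hceil : ∀ m : ℕ, ⌈α * (p : ℝ) ^ (m + e)⌉₊ = r * p ^ m + ⌈α * (p : ℝ) ^ m⌉₊ := by
    intro m
    have h1 : α * (p : ℝ) ^ (m + e) = α * (p : ℝ) ^ m + ((r * p ^ m : ℕ) : ℝ) := by
      push_cast
      rw [pow_add]
      linear_combination ((p : ℝ) ^ m) * hkey
    rw [h1, Nat.ceil_add_natCast (by positivity)]
    omega
  rw [testIdeal]
  apply iSup_le
  intro m
  set nm : ℕ → ℕ := fun m => ⌈α * (p : ℝ) ^ m⌉₊ with hnm
  set Jm : ℕ → Ideal R := fun m => frobRoot (Ideal.span {f ^ nm m}) (p ^ m) with hJm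
  have hD : (Ideal.span {f ^ nm (m + e)}) ≤ frobPow (Jm (m + e)) (p ^ (m + e)) :=
    le_frobPow_frobRoot p hflat hfin _ _
  have h1 : f ^ nm (m + e) ∈ frobPow (frobPow (Jm (m + e)) (p ^ e)) (p ^ m) := by
    rw [frobPow_frobPow p _ e m, add_comm e m]
    exact hD (Ideal.subset_span rfl)
  have h2 : f ^ nm m * (f ^ r) ^ p ^ m ∈ frobPow (frobPow (Jm (m + e)) (p ^ e)) (p ^ m) := by
    rw [← pow_mul, ← pow_add]
    have hnn : nm m + r * p ^ m = nm (m + e) := by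
      have := hceil m
      simp only [hnm]
      omega
    rw [hnn]
    exact h1
  have h3 : f ^ nm m ∈
      frobPow ((frobPow (Jm (m + e)) (p ^ e)).colon (Ideal.span {f ^ r})) (p ^ m) := by
    apply colon_frobPow_le p hflat m _ (f ^ r)
    rw [Ideal.mem_colon_span_singleton]
    exact h2
  have h4 : Jm m ≤ (frobPow (Jm (m + e)) (p ^ e)).colon (Ideal.span {f ^ r}) := by
    apply sInf_le
    show Ideal.span {f ^ nm m} ≤ frobPow _ (p ^ m)
    rw [Ideal.span_le, Set.singleton_subset_iff]
    exact h3
  refine le_trans h4 ?_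
  have h5 : frobPow (Jm (m + e)) (p ^ e) ≤
      frobPow (⨆ m : ℕ, frobRoot (Ideal.span {f ^ ⌈α * (p : ℝ) ^ m⌉₊}) (p ^ m)) (p ^ e) :=
    frobPow_mono (le_iSup (fun m : ℕ => frobRoot (Ideal.span {f ^ ⌈α * (p : ℝ) ^ m⌉₊}) (p ^ m))
      (m + e)) _
  intro z hz
  rw [Ideal.mem_colon_span_singleton] at hz ⊢
  exact h5 hz

end Main

/-- The `F`-flag of ideals of `f` and `α = r/(p^e − 1)` is increasing, and
`f^r I^{j+1} ⊆ (I^j)^{[p^e]}` for every `j ≥ 1`. -/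
theorem stmt5 {R : Type*} [CommRing R] [IsDomain R] [IsNoetherianRing R]
    (p : ℕ) [Fact p.Prime] [CharP R p] [ExpChar R p]
    (hflat : @Module.Flat R R _ _ (Module.compHom R (frobenius R p)))
    (hFfin : @Module.Finite R R _ _ (Module.compHom R (frobenius R p)))
    (f : R) (r e : ℕ) (hr : 0 < r) (he : 0 < e)
    (α : ℝ) (hα : α = (r : ℝ) / ((p : ℝ) ^ e - 1)) :
    ∀ j : ℕ, 1 ≤ j →
      Fflag p e r f α j ≤ Fflag p e r f α (j + 1) ∧
      ∀ x ∈ Fflag p e r f α (j + 1), f ^ r * x ∈ frobPow (Fflag p e r f α j) (p ^ e) := by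
  have hflat' : Module.Flat R (FrobM R (frobenius R p)) := hflat
  have hfin' : Module.Finite R (FrobM R (frobenius R p)) := hFfin
  have hp : 1 < p := (Fact.out : p.Prime).one_lt
  have base : testIdeal p f α ≤
      (frobPow (testIdeal p f α) (p ^ e)).colon (Ideal.span {f ^ r}) :=
    testIdeal_le_colon p hflat' hfin' f r e he hp α hα
  have hFf1 : Fflag p e r f α 1 = testIdeal p f α := rfl
  have hFf2 : ∀ k : ℕ, Fflag p e r f α (k + 2) =
      (frobPow (Fflag p e r f α (k + 1)) (p ^ e)).colon (Ideal.span {f ^ r}) := fun _ => rfl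
  have mono : ∀ j : ℕ, Fflag p e r f α (j + 1) ≤ Fflag p e r f α (j + 2) := by
    intro j
    induction j with
    | zero => rw [hFf1, hFf2 0, hFf1]; exact base
    | succ k ih =>
      rw [hFf2 k, hFf2 (k + 1)]
      intro z hz
      rw [Ideal.mem_colon_span_singleton] at hz ⊢
      exact frobPow_mono ih _ hz
  intro j hj
  obtain ⟨k, rfl⟩ : ∃ k, j = k + 1 := ⟨j - 1, by omega⟩
  refine ⟨mono k, fun x hx => ?_⟩
  have hx' : x ∈ (frobPow (Fflag p e r f α (k + 1)) (p ^ e)).colon (Ideal.span {f ^ r}) := by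
    rw [← hFf2 k]
    exact hx
  rw [Ideal.mem_colon_span_singleton] at hx'
  rwa [mul_comm]
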